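/- Let n ≥ 2, α ∈ (1,2), ε ∈ (0,1) with α − 1 − 2ε^α ≥ 0, and let φ̃(x) = x₁^α − ε^α |x|^α on ℝⁿ. Then for every x ∈ ℝⁿ with x₁ > ε|x| > 0, one has ⟨∇φ̃(x), (D²φ̃(x) − α ε^α |x|^{α−2} Iₙ) ∇φ̃(x)⟩ ≥ α³ |x|^{3α−4} ε^{2α−2} · m(α, ε), where m(α, ε) = (α − 1 − 2ε^α)(1 − ε^α)² − 2ε^{α+2}(1 − ε²). -/

import Mathlib

open Real Set

set_option maxHeartbeats 1000000

/-- The weight `φ̃(x) = x₁^α - ε^α |x|^α`. -/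
noncomputable def phit {n : ℕ} [NeZero n] (α ε : ℝ)
    (x : EuclideanSpace ℝ (Fin n)) : ℝ :=
  x 0 ^ α - ε ^ α * ‖x‖ ^ α

/-- The Hessian matrix of `f` at `x`: `(i, j) ↦ ∂ᵢ∂ⱼ f (x)`. -/
noncomputable def hess {n : ℕ} (f : EuclideanSpace ℝ (Fin n) → ℝ)
    (x : EuclideanSpace ℝ (Fin n)) : Matrix (Fin n) (Fin n) ℝ :=
  Matrix.of fun i j =>
    fderiv ℝ (fun y => fderiv ℝ f y (EuclideanSpace.single j 1)) x
      (EuclideanSpace.single i 1)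

/-- The quantity `m(α, ε) = (α - 1 - 2ε^α)(1 - ε^α)² - 2ε^{α+2}(1 - ε²)`. -/
noncomputable def mfun (α ε : ℝ) : ℝ :=
  (α - 1 - 2 * ε ^ α) * (1 - ε ^ α) ^ 2 - 2 * ε ^ (α + 2) * (1 - ε ^ 2)

section Aux

variable {n : ℕ} [NeZero n]
local notation "E" => EuclideanSpace ℝ (Fin n)

lemma norm_rpow_hasFDerivAt {y : E} (hy : y ≠ 0) (p : ℝ) :
    HasFDerivAt (fun z : E => ‖z‖ ^ p) ((p * ‖y‖ ^ (p - 2)) • innerSL ℝ y) y := by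
  have h0 : (0:ℝ) < ‖y‖ := norm_pos_iff.2 hy
  have h2 : HasFDerivAt (fun z : E => (‖z‖^2 : ℝ)) ((2:ℕ) • innerSL ℝ y) y :=
    (hasStrictFDerivAt_norm_sq y).hasFDerivAt
  have h3 := h2.rpow_const (p := p/2) (Or.inl (by positivity))
  have hfun : (fun z : E => (‖z‖^2 : ℝ) ^ (p/2)) = fun z : E => ‖z‖ ^ p := by
    funext z
    rw [← Real.rpow_natCast ‖z‖ 2, ← Real.rpow_mul (norm_nonneg z)]
    ring_nf
  rw [hfun] at h3
  convert h3 using 1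
  ext v
  simp only [ContinuousLinearMap.smul_apply, innerSL_apply_apply, smul_eq_mul,
    ContinuousLinearMap.coe_smul', Pi.smul_apply, nsmul_eq_mul, Nat.cast_ofNat]
  rw [← Real.rpow_natCast ‖y‖ 2, ← Real.rpow_mul (norm_nonneg y),
    show ((2:ℕ):ℝ)*(p/2-1) = p-2 by push_cast; ring]
  push_cast
  module

noncomputable def phit' {n : ℕ} [NeZero n] (α ε : ℝ) (y : EuclideanSpace ℝ (Fin n)) :
    EuclideanSpace ℝ (Fin n) →L[ℝ] ℝ :=
  (α * y 0 ^ (α-1)) • EuclideanSpace.proj (0 : Fin n) -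
    (ε ^ α) • ((α * ‖y‖ ^ (α-2)) • innerSL ℝ y)


lemma phit_hasFDerivAt (α ε : ℝ) {y : E} (h0 : y 0 ≠ 0) (hy : y ≠ 0) :
    HasFDerivAt (phit α ε) (phit' α ε y) y := by
  have h1 : HasFDerivAt (fun z : E => z 0 ^ α)
      ((α * y 0 ^ (α-1)) • (EuclideanSpace.proj (0 : Fin n) : E →L[ℝ] ℝ)) y := by
    have hp : HasFDerivAt (fun z : E => z 0)
        (EuclideanSpace.proj (0 : Fin n) : E →L[ℝ] ℝ) y :=
      (EuclideanSpace.proj (0 : Fin n) : E →L[ℝ] ℝ).hasFDerivAt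
    have := hp.rpow_const (p := α) (Or.inl h0)
    simpa using this
  have h2 : HasFDerivAt (fun z : E => ε ^ α * ‖z‖ ^ α)
      ((ε ^ α) • ((α * ‖y‖ ^ (α-2)) • innerSL ℝ y)) y :=
    (norm_rpow_hasFDerivAt hy α).const_mul _
  exact h1.sub h2

lemma phit'_apply (α ε : ℝ) (y : E) (j : Fin n) :
    phit' α ε y (EuclideanSpace.single j 1) =
      α * y 0 ^ (α-1) * (if j = 0 then (1:ℝ) else 0)
        - ε ^ α * (α * ‖y‖ ^ (α-2) * y j) := by
  have h : (inner ℝ y (EuclideanSpace.single j (1:ℝ)) : ℝ) = y j := by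
    rw [EuclideanSpace.inner_single_right]; simp
  simp only [phit', ContinuousLinearMap.sub_apply, ContinuousLinearMap.smul_apply,
    PiLp.proj_apply, EuclideanSpace.single_apply, innerSL_apply_apply, smul_eq_mul, h]
  by_cases hj : j = 0
  · simp [hj]
  · simp [hj, Ne.symm hj]

noncomputable def dd {n : ℕ} [NeZero n] (j : Fin n) : ℝ := if j = 0 then 1 else 0

noncomputable def Hfun {n : ℕ} [NeZero n] (α ε : ℝ) (j : Fin n)
    (y : EuclideanSpace ℝ (Fin n)) : ℝ :=
  α * y 0 ^ (α-1) * dd j - ε ^ α * (α * ‖y‖ ^ (α-2) * y j)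

lemma grad_apply (α ε : ℝ) {x : E} (h0 : x 0 ≠ 0) (hx : x ≠ 0) (i : Fin n) :
    gradient (phit α ε) x i
      = α * x 0 ^ (α-1) * dd i - ε ^ α * (α * ‖x‖ ^ (α-2) * x i) := by
  have h1 : (gradient (phit α ε) x) i
      = (inner ℝ (gradient (phit α ε) x) (EuclideanSpace.single i (1:ℝ)) : ℝ) := by
    rw [EuclideanSpace.inner_single_right]; simp
  rw [h1]
  show (inner ℝ ((InnerProductSpace.toDual ℝ E).symm (fderiv ℝ (phit α ε) x))
    (EuclideanSpace.single i (1:ℝ)) : ℝ) = _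
  rw [InnerProductSpace.toDual_symm_apply, (phit_hasFDerivAt α ε h0 hx).fderiv,
    phit'_apply]
  simp [dd, mul_ite]

lemma Hfun_hasFDerivAt (α ε : ℝ) {x : E} (h0 : x 0 ≠ 0) (hx : x ≠ 0) (j : Fin n) :
    HasFDerivAt (Hfun α ε j)
      ((α * dd j * ((α-1) * x 0 ^ (α-2))) • (EuclideanSpace.proj (0 : Fin n) : E →L[ℝ] ℝ)
        - (ε ^ α * α) • (‖x‖ ^ (α-2) • (EuclideanSpace.proj j : E →L[ℝ] ℝ)
            + x j • (((α-2) * ‖x‖ ^ (α-2-2)) • innerSL ℝ x))) x := by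
  have hp : HasFDerivAt (fun z : E => z 0)
      (EuclideanSpace.proj (0 : Fin n) : E →L[ℝ] ℝ) x :=
    (EuclideanSpace.proj (0 : Fin n) : E →L[ℝ] ℝ).hasFDerivAt
  have hpj : HasFDerivAt (fun z : E => z j)
      (EuclideanSpace.proj j : E →L[ℝ] ℝ) x :=
    (EuclideanSpace.proj j : E →L[ℝ] ℝ).hasFDerivAt
  have h1 : HasFDerivAt (fun y : E => α * dd j * y 0 ^ (α-1))
      ((α * dd j * ((α-1) * x 0 ^ (α-2))) • (EuclideanSpace.proj (0 : Fin n) : E →L[ℝ] ℝ)) x := by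
    have := (hp.rpow_const (p := α-1) (Or.inl h0)).const_mul (α * dd j)
    simpa [smul_smul, show α-1-1 = α-2 by ring, mul_assoc] using this
  have h2 : HasFDerivAt (fun y : E => (ε ^ α * α) * (‖y‖ ^ (α-2) * y j))
      ((ε ^ α * α) • (‖x‖ ^ (α-2) • (EuclideanSpace.proj j : E →L[ℝ] ℝ)
        + x j • (((α-2) * ‖x‖ ^ (α-2-2)) • innerSL ℝ x))) x :=
    ((norm_rpow_hasFDerivAt hx (α-2)).mul hpj).const_mul _
  have heq : Hfun α ε j = fun y : E =>
      α * dd j * y 0 ^ (α-1) - (ε ^ α * α) * (‖y‖ ^ (α-2) * y j) := by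
    funext y; simp [Hfun]; ring
  rw [heq]
  exact h1.sub h2


lemma hess_apply (α ε : ℝ) {x : E} (h0 : 0 < x 0) (i j : Fin n) :
    hess (phit α ε) x i j
      = α * (α-1) * x 0 ^ (α-2) * dd i * dd j
        - ε ^ α * α * (α-2) * ‖x‖ ^ (α-4) * x i * x j
        - ε ^ α * α * ‖x‖ ^ (α-2) * (if i = j then 1 else 0) := by
  have hx : x ≠ 0 := by
    intro h; rw [h] at h0; simp at h0
  have hopen : IsOpen {y : E | 0 < y 0} := by
    have : Continuous fun y : E => y 0 :=
      (EuclideanSpace.proj (0 : Fin n) : E →L[ℝ] ℝ).continuous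
    exact isOpen_lt continuous_const this
  have hev : (fun y => fderiv ℝ (phit α ε) y (EuclideanSpace.single j 1))
      =ᶠ[nhds x] Hfun α ε j := by
    filter_upwards [hopen.mem_nhds h0] with y hy
    have hy0 : (0:ℝ) < y 0 := hy
    have hyne : y ≠ 0 := by
      intro h; rw [h] at hy0; simp at hy0
    rw [(phit_hasFDerivAt α ε hy0.ne' hyne).fderiv, phit'_apply]
    simp [Hfun, dd]
  have hfd := (Hfun_hasFDerivAt α ε h0.ne' hx j).fderiv
  show fderiv ℝ (fun y => fderiv ℝ (phit α ε) y (EuclideanSpace.single j 1)) x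
      (EuclideanSpace.single i 1) = _
  rw [hev.fderiv_eq, hfd]
  have hin : (inner ℝ x (EuclideanSpace.single i (1:ℝ)) : ℝ) = x i := by
    rw [EuclideanSpace.inner_single_right]; simp
  simp only [ContinuousLinearMap.sub_apply, ContinuousLinearMap.smul_apply,
    ContinuousLinearMap.add_apply, PiLp.proj_apply, EuclideanSpace.single_apply,
    innerSL_apply_apply, smul_eq_mul, hin]
  rw [show α-2-2 = α-4 by ring]
  unfold dd
  rw [show (if (0:Fin n) = i then (1:ℝ) else 0) = (if i = 0 then (1:ℝ) else 0) from by
        by_cases h : i = 0 <;> simp [h, eq_comm],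
      show (if j = i then (1:ℝ) else 0) = (if i = j then (1:ℝ) else 0) from by
        by_cases h : i = j <;> simp [h, eq_comm]]
  ring

lemma mono_aux (α ε r : ℝ) (hα1 : 1 < α) (hα2 : α < 2) (hε0 : 0 < ε) (hε1 : ε < 1)
    (hk : 2 * ε ^ α ≤ α - 1) (hr : 0 < r) {t : ℝ} (h1 : ε * r ≤ t) (h2 : t ≤ r) :
    ε ^ (α-1) * r ^ (α-1) * (1 - ε^2) ≤ t ^ (α-1) - ε ^ α * r ^ (α-2) * t := by
  set f : ℝ → ℝ := fun s => s ^ (α-1) - ε ^ α * r ^ (α-2) * s with hf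
  have her : 0 < ε * r := mul_pos hε0 hr
  have hmon : MonotoneOn f (Icc (ε*r) r) := by
    apply monotoneOn_of_deriv_nonneg (convex_Icc _ _)
    · apply ContinuousOn.sub
      · exact (continuousOn_id.rpow_const fun s hs => Or.inl (ne_of_gt (lt_of_lt_of_le her hs.1)))
      · exact (continuousOn_const.mul continuousOn_id)
    · intro s hs
      rw [interior_Icc] at hs
      have hs0 : (0:ℝ) < s := lt_trans her hs.1
      have hd : HasDerivAt f ((α-1) * s ^ (α-1-1) - ε ^ α * r ^ (α-2)) s := by
        have ha := Real.hasDerivAt_rpow_const (x := s) (p := α-1) (Or.inl hs0.ne')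
        have hb := ((hasDerivAt_id s).const_mul (ε ^ α * r ^ (α-2)))
        have h := ha.sub hb; rw [mul_one] at h; exact h
      exact hd.differentiableAt.differentiableWithinAt
    · intro s hs
      rw [interior_Icc] at hs
      have hs0 : (0:ℝ) < s := lt_trans her hs.1
      have hd : HasDerivAt f ((α-1) * s ^ (α-1-1) - ε ^ α * r ^ (α-2)) s := by
        have h1 := Real.hasDerivAt_rpow_const (x := s) (p := α-1) (Or.inl hs0.ne')
        have h2 := ((hasDerivAt_id s).const_mul (ε ^ α * r ^ (α-2)))
        have h := h1.sub h2; rw [mul_one] at h; exact h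
      rw [hd.deriv]
      have hw : r ^ (α-2) ≤ s ^ (α-2) :=
        Real.rpow_le_rpow_of_nonpos hs0 hs.2.le (by linarith)
      have hεα : (0:ℝ) < ε ^ α := Real.rpow_pos_of_pos hε0 _
      have hrw : (0:ℝ) < r ^ (α-2) := Real.rpow_pos_of_pos hr _
      have hsw : (0:ℝ) < s ^ (α-2) := Real.rpow_pos_of_pos hs0 _
      have : ε ^ α * r ^ (α-2) ≤ (α-1) * s ^ (α-2) := by
        calc ε ^ α * r ^ (α-2) ≤ ε ^ α * s ^ (α-2) := by nlinarith
        _ ≤ (α-1) * s ^ (α-2) := by nlinarith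
      rw [show α-1-1 = α-2 by ring]
      linarith
  have key := hmon (left_mem_Icc.2 (le_trans (by nlinarith) h2)) ⟨h1, h2⟩ h1
  have hfer : f (ε*r) = ε ^ (α-1) * r ^ (α-1) * (1 - ε^2) := by
    have e1 : (ε*r) ^ (α-1) = ε ^ (α-1) * r ^ (α-1) := Real.mul_rpow hε0.le hr.le
    have e2 : ε ^ α * r ^ (α-2) * (ε * r) = ε ^ (α-1) * ε ^ 2 * r ^ (α-1) := by
      rw [show ε ^ α * r ^ (α-2) * (ε * r) = (ε ^ α * ε) * (r ^ (α-2) * r) by ring]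
      rw [← Real.rpow_add_one hε0.ne' α, ← Real.rpow_add_one hr.ne' (α-2)]
      rw [show ε ^ (α-1) * ε ^ 2 = ε ^ (α-1) * ε ^ ((2:ℕ):ℝ) from by norm_num]
      rw [← Real.rpow_add hε0, show α - 1 + (2:ℕ) = α + 1 by push_cast; ring,
        show α - 2 + 1 = α - 1 by ring]
    simp only [hf]
    rw [e1, e2]; ring
  rw [hfer] at key
  exact key


lemma key_ineq (α ε t r : ℝ) (hα1 : 1 < α) (hα2 : α < 2) (hε0 : 0 < ε) (hε1 : ε < 1)
    (hcoef : 0 ≤ α - 1 - 2 * ε ^ α) (hr : 0 < r) (h1 : ε * r < t) (h2 : t ≤ r) :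
    α ^ 3 * r ^ (3*α-4) * ε ^ (2*α-2) * mfun α ε ≤
      (α*(α-1)*t^(α-2)) * (α*t^(α-1) - ε^α*α*r^(α-2)*t)^2
      - (ε^α*α*(α-2)*r^(α-4)) * ((α*t^(α-1))*t - (ε^α*α*r^(α-2))*r^2)^2
      - 2*(ε^α*α*r^(α-2)) * ((α*t^(α-1))^2 - 2*(α*t^(α-1))*(ε^α*α*r^(α-2))*t
          + (ε^α*α*r^(α-2))^2*r^2) := by
  have ht : 0 < t := lt_trans (mul_pos hε0 hr) h1
  have hk0 : (0:ℝ) < ε ^ α := Real.rpow_pos_of_pos hε0 _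
  have hk1 : ε ^ α < 1 := Real.rpow_lt_one hε0.le hε1 (by linarith)
  have hu0 : (0:ℝ) < t ^ (α-2) := Real.rpow_pos_of_pos ht _
  have hw0 : (0:ℝ) < r ^ (α-2) := Real.rpow_pos_of_pos hr _
  have hw40 : (0:ℝ) < r ^ (α-4) := Real.rpow_pos_of_pos hr _
  have hp0 : (0:ℝ) < ε ^ (α-1) := Real.rpow_pos_of_pos hε0 _
  have hq0 : (0:ℝ) < r ^ (α-1) := Real.rpow_pos_of_pos hr _
  have hut : t ^ (α-1) = t ^ (α-2) * t := by
    rw [show α-1 = (α-2)+1 by ring, Real.rpow_add_one ht.ne']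
  have huw : r ^ (α-2) ≤ t ^ (α-2) :=
    Real.rpow_le_rpow_of_nonpos ht h2 (by linarith)
  have hk2 : ε ^ (2:ℕ) ≤ ε ^ α := by
    have := Real.rpow_le_rpow_of_exponent_ge hε0 hε1.le hα2.le
    rwa [show (2:ℝ) = ((2:ℕ):ℝ) by norm_num, Real.rpow_natCast] at this
  -- identities
  have E1 : r ^ (3*α-4) * ε ^ (2*α-2)
      = (r^(α-2) * (r^(α-1) * r^(α-1))) * (ε^(α-1) * ε^(α-1)) := by
    rw [← Real.rpow_add hr, ← Real.rpow_add hr, ← Real.rpow_add hε0]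
    congr 1 <;> [skip; congr 1] <;> ring_nf
  have E2 : r ^ (3*α-4) * (ε ^ (2*α-2) * ε ^ (α+2))
      = (r^(α-2) * r^(α-2) * r^(α-2) * r^(2:ℕ)) * (ε^α * ε^α * ε^α) := by
    rw [show ((r:ℝ)^(2:ℕ)) = r^((2:ℕ):ℝ) from (Real.rpow_natCast r 2).symm]
    rw [← Real.rpow_add hr, ← Real.rpow_add hr, ← Real.rpow_add hr,
      ← Real.rpow_add hε0, ← Real.rpow_add hε0, ← Real.rpow_add hε0]
    push_cast
    congr 1 <;> congr 1 <;> ring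
  -- monotonicity consequence
  have hmono : ε^(α-1) * r^(α-1) * (1-ε^2)
      ≤ t^(α-2)*t - ε^α * r^(α-2) * t := by
    have := mono_aux α ε r hα1 hα2 hε0 hε1 (by linarith) hr h1.le h2
    rwa [hut] at this
  -- T1 bound
  have ha : (0:ℝ) ≤ ε^(α-1) * r^(α-1) * (1-ε^α) := by
    apply mul_nonneg (by positivity); linarith
  have hb : ε^(α-1) * r^(α-1) * (1-ε^α) ≤ ε^(α-1) * r^(α-1) * (1-ε^2) := by
    have : (0:ℝ) ≤ ε^(α-1) * r^(α-1) := by positivity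
    nlinarith [hk2]
  have hc : ε^(α-1) * r^(α-1) * (1-ε^α) ≤ t^(α-2)*t - ε^α*r^(α-2)*t :=
    le_trans hb hmono
  have hX2 : (ε^(α-1) * r^(α-1) * (1-ε^α))^2 ≤ (t^(α-2)*t - ε^α*r^(α-2)*t)^2 :=
    pow_le_pow_left₀ ha hc 2
  have hcoefB : (α-1-2*ε^α) * r^(α-2) ≤ (α-1)*t^(α-2) - 2*ε^α*r^(α-2) := by
    nlinarith [huw]
  have hcoefB0 : (0:ℝ) ≤ (α-1-2*ε^α) * r^(α-2) := mul_nonneg hcoef hw0.le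
  have hT1 : ((α-1-2*ε^α) * r^(α-2)) * (ε^(α-1) * r^(α-1) * (1-ε^α))^2
      ≤ ((α-1)*t^(α-2) - 2*ε^α*r^(α-2)) * (t^(α-2)*t - ε^α*r^(α-2)*t)^2 :=
    mul_le_mul hcoefB hX2 (sq_nonneg _) (le_trans hcoefB0 hcoefB)
  -- T2 bound
  have hT2 : (0:ℝ) ≤ ε^α*(2-α)*r^(α-4)*(t^(α-2)*t^2 - ε^α*r^(α-2)*r^(2:ℕ))^2 := by
    apply mul_nonneg; apply mul_nonneg; apply mul_nonneg
    · exact hk0.le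
    · linarith
    · exact hw40.le
    · exact sq_nonneg _
  -- T3 bound
  have hT3 : 2*(ε^α*ε^α*ε^α)*(r^(α-2)*r^(α-2)*r^(α-2))*(r^(2:ℕ)-t^(2:ℕ))
      ≤ 2*(ε^α*ε^α*ε^α)*(r^(α-2)*r^(α-2)*r^(α-2))*(r^(2:ℕ)-ε^(2:ℕ)*r^(2:ℕ)) := by
    have h : r^(2:ℕ)-t^(2:ℕ) ≤ r^(2:ℕ)-ε^(2:ℕ)*r^(2:ℕ) := by nlinarith [mul_pos hε0 hr]
    have hco : (0:ℝ) ≤ 2*(ε^α*ε^α*ε^α)*(r^(α-2)*r^(α-2)*r^(α-2)) := by positivity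
    exact mul_le_mul_of_nonneg_left h hco
  -- final
  have hLHS : α ^ 3 * r ^ (3*α-4) * ε ^ (2*α-2) * mfun α ε
      = α^3 * ((α-1-2*ε^α)*r^(α-2)*(ε^(α-1)*r^(α-1)*(1-ε^α))^2
          - 2*(ε^α*ε^α*ε^α)*(r^(α-2)*r^(α-2)*r^(α-2))*(r^(2:ℕ)-ε^(2:ℕ)*r^(2:ℕ))) := by
    simp only [mfun]
    linear_combination (α^3*(α-1-2*ε^α)*(1-ε^α)^2) * E1 - (2*α^3*(1-ε^2)) * E2
  have hring : (α*(α-1)*t^(α-2)) * (α*t^(α-1) - ε^α*α*r^(α-2)*t)^2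
      - (ε^α*α*(α-2)*r^(α-4)) * ((α*t^(α-1))*t - (ε^α*α*r^(α-2))*r^2)^2
      - 2*(ε^α*α*r^(α-2)) * ((α*t^(α-1))^2 - 2*(α*t^(α-1))*(ε^α*α*r^(α-2))*t
          + (ε^α*α*r^(α-2))^2*r^2)
      = α^3 * ( ((α-1)*t^(α-2) - 2*ε^α*r^(α-2)) * (t^(α-2)*t - ε^α*r^(α-2)*t)^2
          + ε^α*(2-α)*r^(α-4)*(t^(α-2)*t^2 - ε^α*r^(α-2)*r^(2:ℕ))^2
          - 2*(ε^α*ε^α*ε^α)*(r^(α-2)*r^(α-2)*r^(α-2))*(r^(2:ℕ)-t^(2:ℕ)) ) := by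
    rw [hut]; ring
  rw [hLHS, hring]
  have hsum : (α-1-2*ε^α)*r^(α-2)*(ε^(α-1)*r^(α-1)*(1-ε^α))^2
      - 2*(ε^α*ε^α*ε^α)*(r^(α-2)*r^(α-2)*r^(α-2))*(r^(2:ℕ)-ε^(2:ℕ)*r^(2:ℕ))
      ≤ ((α-1)*t^(α-2) - 2*ε^α*r^(α-2)) * (t^(α-2)*t - ε^α*r^(α-2)*t)^2
          + ε^α*(2-α)*r^(α-4)*(t^(α-2)*t^2 - ε^α*r^(α-2)*r^(2:ℕ))^2
          - 2*(ε^α*ε^α*ε^α)*(r^(α-2)*r^(α-2)*r^(α-2))*(r^(2:ℕ)-t^(2:ℕ)) := by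
    linarith [hT1, hT2, hT3]
  have hα3 : (0:ℝ) ≤ α^3 := by positivity
  exact mul_le_mul_of_nonneg_left hsum hα3

end Aux

/-- Positivity of the leading term of the Carleman commutator: for `x` in the
cone `x₁ > ε |x| > 0`,
`⟨∇φ̃, (D²φ̃ - α ε^α |x|^{α-2} Iₙ) ∇φ̃⟩ ≥ α³ |x|^{3α-4} ε^{2α-2} m(α, ε)`. -/
theorem cubic_form_lower_bound (n : ℕ) [NeZero n] (hn : 2 ≤ n) (α ε : ℝ)
    (hα : α ∈ Set.Ioo (1 : ℝ) 2) (hε : ε ∈ Set.Ioo (0 : ℝ) 1)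
    (hcoef : 0 ≤ α - 1 - 2 * ε ^ α)
    (x : EuclideanSpace ℝ (Fin n)) (hx1 : ε * ‖x‖ < x 0) (hx0 : 0 < ε * ‖x‖) :
    α ^ 3 * ‖x‖ ^ (3 * α - 4) * ε ^ (2 * α - 2) * mfun α ε ≤
      dotProduct (fun i => gradient (phit α ε) x i)
        (Matrix.mulVec
          (hess (phit α ε) x -
            (α * ε ^ α * ‖x‖ ^ (α - 2)) • (1 : Matrix (Fin n) (Fin n) ℝ))
          (fun i => gradient (phit α ε) x i)) := by
  obtain ⟨hα1, hα2⟩ := hα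
  obtain ⟨hε0, hε1⟩ := hε
  have hr : (0:ℝ) < ‖x‖ := by
    by_contra h
    push_neg at h
    nlinarith [hx0]
  have ht0 : (0:ℝ) < x 0 := lt_trans hx0 hx1
  have hxne : x ≠ 0 := by
    intro h; rw [h] at hr; simp at hr
  have htr : x 0 ≤ ‖x‖ := by
    have h1 : (inner ℝ x (EuclideanSpace.single (0 : Fin n) (1:ℝ)) : ℝ) = x 0 := by
      rw [EuclideanSpace.inner_single_right]; simp
    have h2 := real_inner_le_norm x (EuclideanSpace.single (0 : Fin n) (1:ℝ))
    rw [h1, EuclideanSpace.norm_single] at h2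
    simpa using h2
  set A : ℝ := α * x 0 ^ (α-1) with hA
  set B : ℝ := ε ^ α * α * ‖x‖ ^ (α-2) with hB
  set C : ℝ := α * (α-1) * x 0 ^ (α-2) with hC
  set D : ℝ := ε ^ α * α * (α-2) * ‖x‖ ^ (α-4) with hD
  set g : Fin n → ℝ := fun i => gradient (phit α ε) x i with hgdef
  set M : Matrix (Fin n) (Fin n) ℝ :=
    hess (phit α ε) x - (α * ε ^ α * ‖x‖ ^ (α - 2)) • (1 : Matrix (Fin n) (Fin n) ℝ)
    with hMdef
  have hg : ∀ i, g i = A * dd i - B * x i := by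
    intro i
    rw [hgdef]
    simp only
    rw [grad_apply α ε ht0.ne' hxne i, hA, hB]
    ring
  have hM : ∀ i j, M i j = C * dd i * dd j - D * (x i * x j)
      - 2 * B * (if i = j then (1:ℝ) else 0) := by
    intro i j
    rw [hMdef]
    simp only [Matrix.sub_apply, Matrix.smul_apply, Matrix.one_apply, smul_eq_mul]
    rw [hess_apply α ε ht0 i j, hC, hD, hB]
    by_cases hij : i = j <;> simp [hij] <;> ring
  have hdd0 : dd (0 : Fin n) = 1 := by simp [dd]
  have S1 : ∀ v : Fin n → ℝ, (∑ j, dd j * v j) = v 0 := by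
    intro v
    simp [dd, ite_mul]
  have S2 : (∑ j, x j * x j) = ‖x‖^2 := by
    rw [← real_inner_self_eq_norm_sq]
    rw [PiLp.inner_apply]
    simp [RCLike.inner_apply, sq]
  have hSd : (∑ j, dd j * g j) = A - B * x 0 := by
    rw [S1 g, hg 0, hdd0, mul_one]
  have hSx : (∑ j, x j * g j) = A * x 0 - B * ‖x‖^2 := by
    have h : ∀ j ∈ Finset.univ, x j * g j = A * (dd j * x j) - B * (x j * x j) :=
      fun j _ => by rw [hg]; ring
    rw [Finset.sum_congr rfl h, Finset.sum_sub_distrib, ← Finset.mul_sum,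
      ← Finset.mul_sum, S1 x, S2]
  have hSg : (∑ j, g j * g j) = A^2 - 2*A*B*(x 0) + B^2*‖x‖^2 := by
    have h : ∀ j ∈ Finset.univ, g j * g j
        = A^2 * (dd j * dd j) - 2*A*B*(dd j * x j) + B^2*(x j * x j) :=
      fun j _ => by rw [hg]; ring
    have hdd2 : ∀ j : Fin n, dd j * dd j = dd j := by
      intro j; by_cases h : j = 0 <;> simp [dd, h]
    rw [Finset.sum_congr rfl h]
    rw [Finset.sum_add_distrib, Finset.sum_sub_distrib, ← Finset.mul_sum,
      ← Finset.mul_sum, ← Finset.mul_sum]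
    have hsum1 : (∑ j : Fin n, dd j * dd j) = ∑ j : Fin n, dd j :=
      Finset.sum_congr rfl (fun j _ => hdd2 j)
    rw [hsum1]
    have hsdd : (∑ j : Fin n, dd j) = (1:ℝ) := by simp [dd]
    rw [hsdd, S1 x, S2]
    ring
  have hrow : ∀ i, Matrix.mulVec M g i
      = C * dd i * (A - B * x 0) - D * x i * (A * x 0 - B * ‖x‖^2) - 2*B*(g i) := by
    intro i
    have hmv : Matrix.mulVec M g i = ∑ j, M i j * g j := by
      simp [Matrix.mulVec, dotProduct]
    rw [hmv]
    have h : ∀ j ∈ Finset.univ, M i j * g j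
        = C * dd i * (dd j * g j) - D * x i * (x j * g j)
          - 2*B*((if i = j then (1:ℝ) else 0) * g j) :=
      fun j _ => by rw [hM]; ring
    rw [Finset.sum_congr rfl h, Finset.sum_sub_distrib, Finset.sum_sub_distrib,
      ← Finset.mul_sum, ← Finset.mul_sum, ← Finset.mul_sum, hSd, hSx]
    have hid : (∑ j, (if i = j then (1:ℝ) else 0) * g j) = g i := by
      simp [ite_mul]
    rw [hid]
  have hQ : dotProduct g (Matrix.mulVec M g)
      = C*(A - B*(x 0))^2 - D*(A*(x 0) - B*‖x‖^2)^2
        - 2*B*(A^2 - 2*A*B*(x 0) + B^2*‖x‖^2) := by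
    rw [dotProduct]
    have h : ∀ i ∈ Finset.univ, g i * Matrix.mulVec M g i
        = C*(A - B*(x 0))*(dd i * g i) - D*(A*(x 0) - B*‖x‖^2)*(x i * g i)
          - 2*B*(g i * g i) :=
      fun i _ => by rw [hrow]; ring
    rw [Finset.sum_congr rfl h, Finset.sum_sub_distrib, Finset.sum_sub_distrib,
      ← Finset.mul_sum, ← Finset.mul_sum, ← Finset.mul_sum, hSd, hSx, hSg]
    ring
  show α ^ 3 * ‖x‖ ^ (3 * α - 4) * ε ^ (2 * α - 2) * mfun α ε
      ≤ dotProduct g (Matrix.mulVec M g)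
  rw [hQ]
  have hkey := key_ineq α ε (x 0) ‖x‖ hα1 hα2 hε0 hε1 hcoef hr hx1 htr
  calc α ^ 3 * ‖x‖ ^ (3 * α - 4) * ε ^ (2 * α - 2) * mfun α ε
      ≤ (α*(α-1)*(x 0)^(α-2)) * (α*(x 0)^(α-1) - ε^α*α*‖x‖^(α-2)*(x 0))^2
      - (ε^α*α*(α-2)*‖x‖^(α-4)) * ((α*(x 0)^(α-1))*(x 0) - (ε^α*α*‖x‖^(α-2))*‖x‖^2)^2
      - 2*(ε^α*α*‖x‖^(α-2)) * ((α*(x 0)^(α-1))^2 - 2*(α*(x 0)^(α-1))*(ε^α*α*‖x‖^(α-2))*(x 0)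
          + (ε^α*α*‖x‖^(α-2))^2*‖x‖^2) := hkey
    _ = C*(A - B*(x 0))^2 - D*(A*(x 0) - B*‖x‖^2)^2
        - 2*B*(A^2 - 2*A*B*(x 0) + B^2*‖x‖^2) := by
      rw [hA, hB, hC, hD]
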